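/- Both sequences of Kochański approximants converge to α: lim R_n/S_n = lim P_n/Q_n = α. -/

import Mathlib

open Filter

theorem kochanski_convergence (α : ℝ) (hα : 0 < α) (hirr : Irrational α)
    (R S P Q x : ℕ → ℤ)
    (hR0 : 0 < R 0) (hS0 : 0 < S 0)
    (hfrac : α < (R 0 : ℝ) / (S 0 : ℝ))
    (hx : ∀ n, x n = ⌊(α - ⌊α⌋) / ((R n : ℝ) - α * (S n : ℝ))⌋)
    (hx0 : 0 < x 0)
    (hR : ∀ n, R (n + 1) = R n * (x n + 1) + ⌊α⌋)
    (hS : ∀ n, S (n + 1) = S n * (x n + 1) + 1)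
    (hP : ∀ n, P (n + 1) = R n * x n + ⌊α⌋)
    (hQ : ∀ n, Q (n + 1) = S n * x n + 1) :
    Tendsto (fun n => (R n : ℝ) / (S n : ℝ)) atTop (nhds α) ∧
    Tendsto (fun n => (P n : ℝ) / (Q n : ℝ)) atTop (nhds α) := by
  set f : ℝ := α - (⌊α⌋ : ℝ) with hfdef
  have hf1 : f < 1 := by
    have := Int.lt_floor_add_one α
    rw [hfdef]; linarith
  -- the error sequence
  set d : ℕ → ℝ := fun n => (R n : ℝ) - α * (S n : ℝ) with hddef
  have hx' : ∀ n, x n = ⌊f / d n⌋ := fun n => hx n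
  -- key invariant
  have key : ∀ n, 0 < d n ∧ d n ≤ f ∧ (n + 1 : ℤ) ≤ S n := by
    intro n
    induction n with
    | zero =>
      have hS0' : (0 : ℝ) < (S 0 : ℝ) := by exact_mod_cast hS0
      have hd0 : 0 < d 0 := by
        have h := (lt_div_iff₀ hS0').mp hfrac
        simp only [hddef]; linarith
      have hd0f : d 0 ≤ f := by
        have h1 : (1 : ℤ) ≤ ⌊f / d 0⌋ := by rw [← hx' 0]; exact hx0
        have h2 : (1 : ℝ) ≤ f / d 0 := by exact_mod_cast Int.le_floor.mp h1
        exact (one_le_div hd0).mp h2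
      exact ⟨hd0, hd0f, by exact_mod_cast hS0⟩
    | succ n ih =>
      obtain ⟨hdn, hdnf, hSn⟩ := ih
      have hx1 : (1 : ℤ) ≤ x n := by
        rw [hx' n]
        exact Int.le_floor.mpr (by exact_mod_cast (one_le_div hdn).mpr hdnf)
      have hlow : (x n : ℝ) * d n ≤ f := by
        have h := Int.floor_le (f / d n)
        rw [← hx' n] at h
        exact (le_div_iff₀ hdn).mp h
      have hup : f < ((x n : ℝ) + 1) * d n := by
        have h := Int.lt_floor_add_one (f / d n)
        rw [← hx' n] at h
        exact (div_lt_iff₀ hdn).mp h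
      have hdrec : d (n + 1) = d n * ((x n : ℝ) + 1) - f := by
        simp only [hddef, hR n, hS n, hfdef]
        push_cast
        ring
      refine ⟨by nlinarith, by nlinarith, ?_⟩
      rw [hS n]
      have hSn1 : (1 : ℤ) ≤ S n := by linarith [hSn, Int.ofNat_nonneg n]
      push_cast
      nlinarith [mul_nonneg (by linarith : (0:ℤ) ≤ S n) (by linarith : (0:ℤ) ≤ x n)]
  have hx1 : ∀ n, (1 : ℤ) ≤ x n := by
    intro n
    obtain ⟨hdn, hdnf, _⟩ := key n
    rw [hx' n]
    exact Int.le_floor.mpr (by exact_mod_cast (one_le_div hdn).mpr hdnf)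
  -- convergence of R/S
  have hbound : ∀ n : ℕ, |(R n : ℝ) / (S n : ℝ) - α| ≤ 1 / (n + 1) := by
    intro n
    obtain ⟨hdn, hdnf, hSn⟩ := key n
    have hSge : ((n : ℝ) + 1) ≤ (S n : ℝ) := by exact_mod_cast hSn
    have hSpos : (0 : ℝ) < (S n : ℝ) := by
      have : (0 : ℝ) < (n : ℝ) + 1 := by positivity
      linarith
    have heq : (R n : ℝ) / (S n : ℝ) - α = d n / (S n : ℝ) := by
      simp only [hddef]
      field_simp
    rw [heq, abs_of_pos (div_pos hdn hSpos)]
    have h1 : d n / (S n : ℝ) ≤ 1 / ((n : ℝ) + 1) := by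
      apply div_le_div₀ (by norm_num) (by linarith) (by positivity) hSge
    exact h1
  have hRS : Tendsto (fun n => (R n : ℝ) / (S n : ℝ)) atTop (nhds α) := by
    rw [tendsto_iff_dist_tendsto_zero]
    refine squeeze_zero (fun n => dist_nonneg) (fun n => ?_)
      tendsto_one_div_add_atTop_nhds_zero_nat
    rw [Real.dist_eq]
    exact hbound n
  refine ⟨hRS, ?_⟩
  -- convergence of P/Q
  rw [← tendsto_add_atTop_iff_nat 1]
  have hbound2 : ∀ n : ℕ, |(P (n + 1) : ℝ) / (Q (n + 1) : ℝ) - α| ≤ 1 / (n + 1) := by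
    intro n
    obtain ⟨hdn, hdnf, hSn⟩ := key n
    have hx1n : (1 : ℝ) ≤ (x n : ℝ) := by exact_mod_cast hx1 n
    have hlow : (x n : ℝ) * d n ≤ f := by
      have h := Int.floor_le (f / d n)
      rw [← hx' n] at h
      exact (le_div_iff₀ hdn).mp h
    have hQint : ((n : ℤ) + 2) ≤ Q (n + 1) := by
      rw [hQ n]
      have hSn1 : (1 : ℤ) ≤ S n := by linarith [Int.ofNat_nonneg n]
      nlinarith [hx1 n, mul_nonneg (by linarith : (0:ℤ) ≤ S n)
        (by linarith [hx1 n] : (0:ℤ) ≤ x n - 1)]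
    have hQge : ((n : ℝ) + 2) ≤ (Q (n + 1) : ℝ) := by exact_mod_cast hQint
    have hQpos : (0 : ℝ) < (Q (n + 1) : ℝ) := by
      have : (0 : ℝ) < (n : ℝ) + 2 := by positivity
      linarith
    have heq : (P (n + 1) : ℝ) / (Q (n + 1) : ℝ) - α
        = (d n * (x n : ℝ) - f) / (Q (n + 1) : ℝ) := by
      have hnum : (P (n + 1) : ℝ) - α * (Q (n + 1) : ℝ) = d n * (x n : ℝ) - f := by
        rw [hP n, hQ n]
        simp only [hddef, hfdef]
        push_cast
        ring
      field_simp
      linarith [hnum]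
    rw [heq]
    rw [abs_div, abs_of_pos hQpos]
    have habs : |d n * (x n : ℝ) - f| ≤ 1 := by
      rw [abs_le]
      constructor
      · nlinarith
      · nlinarith
    calc |d n * (x n : ℝ) - f| / (Q (n + 1) : ℝ)
        ≤ 1 / ((n : ℝ) + 1) := by
          apply div_le_div₀ (by norm_num) habs (by positivity) (by linarith)
      _ = 1 / ((n : ℝ) + 1) := rfl
  rw [tendsto_iff_dist_tendsto_zero]
  refine squeeze_zero (fun n => dist_nonneg) (fun n => ?_)
    tendsto_one_div_add_atTop_nhds_zero_nat
  rw [Real.dist_eq]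
  exact hbound2 n
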